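/- arXiv:2107.05379 — 3 statements merged into one kernel-verified Lean document; each statement's English description precedes it below -/
import Mathlib

section
/- Let H₁, H₂ be bounded self-adjoint operators on a complex Hilbert space 𝔥, p₁, p₂ ≥ 0 with p₁ + p₂ = 1, H̄ = p₁H₁ + p₂H₂, and F(t) = p₁ e^{itH₁} + p₂ e^{itH₂}. Then for every u ∈ 𝔥 and T > 0, lim_{n→∞} sup_{t∈[0,T]} ‖e^{itH̄} u − (F(t/n))ⁿ u‖ = 0. -/
open NormedSpace

-- quadratic remainder bound for exp
lemma chernoff_aux_exp_bound {𝔸 : Type*} [NormedRing 𝔸] [NormedAlgebra ℂ 𝔸] [CompleteSpace 𝔸]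
    (X : 𝔸) : ‖exp X - 1 - X‖ ≤ ‖X‖ ^ 2 * Real.exp ‖X‖ := by
  set f : ℕ → 𝔸 := fun n => ((Nat.factorial n : ℂ)⁻¹) • X ^ n with hfdef
  have hf : HasSum f (exp X) := exp_series_hasSum_exp' (𝕂 := ℂ) X
  have h2 : HasSum (fun n => f (n + 2)) (exp X - ∑ i ∈ Finset.range 2, f i) :=
    (hasSum_nat_add_iff' 2).mpr hf
  have hsum0 : ∑ i ∈ Finset.range 2, f i = 1 + X := by
    simp [hfdef, Finset.sum_range_succ]
  rw [hsum0] at h2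
  set g : ℕ → ℝ := fun n => ‖X‖ ^ 2 * (((Nat.factorial n : ℝ))⁻¹ * ‖X‖ ^ n) with hgdef
  have hgs : Summable g := by
    apply Summable.mul_left
    have := Real.summable_pow_div_factorial ‖X‖
    simpa [div_eq_inv_mul, mul_comm] using this
  have hle : ∀ n, ‖f (n + 2)‖ ≤ g n := by
    intro n
    have h1 : ‖f (n + 2)‖ ≤ ((Nat.factorial (n + 2) : ℝ))⁻¹ * ‖X‖ ^ (n + 2) := by
      rw [hfdef]
      simp only [norm_smul]
      gcongr
      · simp
      · exact norm_pow_le' X (by omega)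
    refine h1.trans ?_
    rw [hgdef]
    have hfact : ((Nat.factorial (n + 2) : ℝ))⁻¹ ≤ ((Nat.factorial n : ℝ))⁻¹ := by
      apply inv_anti₀
      · exact_mod_cast Nat.factorial_pos n
      · exact_mod_cast Nat.factorial_le (by omega)
    calc ((Nat.factorial (n + 2) : ℝ))⁻¹ * ‖X‖ ^ (n + 2)
        ≤ ((Nat.factorial n : ℝ))⁻¹ * ‖X‖ ^ (n + 2) := by gcongr
      _ = ‖X‖ ^ 2 * (((Nat.factorial n : ℝ))⁻¹ * ‖X‖ ^ n) := by ring
  have hns : Summable fun n => ‖f (n + 2)‖ :=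
    Summable.of_nonneg_of_le (fun n => norm_nonneg _) hle hgs
  have key : ‖exp X - (1 + X)‖ ≤ ∑' n, g n := by
    rw [← h2.tsum_eq]
    exact (norm_tsum_le_tsum_norm hns).trans (Summable.tsum_le_tsum hle hns hgs)
  have hgsum : ∑' n, g n = ‖X‖ ^ 2 * Real.exp ‖X‖ := by
    rw [hgdef, tsum_mul_left]
    congr 1
    rw [Real.exp_eq_exp_ℝ, exp_eq_tsum ℝ]
    simp [smul_eq_mul]
  rw [sub_sub]
  rw [hgsum] at key
  exact key

-- power difference bound
lemma chernoff_aux_pow_sub_pow {𝔸 : Type*} [NormedRing 𝔸] (h1 : ‖(1 : 𝔸)‖ ≤ 1)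
    (A B : 𝔸) (hA : ‖A‖ ≤ 1) (hB : ‖B‖ ≤ 1) : ∀ n : ℕ, ‖A ^ n - B ^ n‖ ≤ n * ‖A - B‖ := by
  have hBp : ∀ k : ℕ, ‖B ^ k‖ ≤ 1 := by
    intro k
    induction k with
    | zero => simpa using h1
    | succ k ih =>
      calc ‖B ^ (k + 1)‖ = ‖B * B ^ k‖ := by rw [pow_succ']
        _ ≤ ‖B‖ * ‖B ^ k‖ := norm_mul_le _ _
        _ ≤ 1 * 1 := mul_le_mul hB ih (norm_nonneg _) zero_le_one
        _ = 1 := one_mul 1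
  intro n
  induction n with
  | zero => simp
  | succ n ih =>
    have heq : A ^ (n + 1) - B ^ (n + 1) = A * (A ^ n - B ^ n) + (A - B) * B ^ n := by
      rw [mul_sub, sub_mul, pow_succ', pow_succ']
      abel
    rw [heq]
    have hd : (0 : ℝ) ≤ ‖A - B‖ := norm_nonneg _
    calc ‖A * (A ^ n - B ^ n) + (A - B) * B ^ n‖
        ≤ ‖A * (A ^ n - B ^ n)‖ + ‖(A - B) * B ^ n‖ := norm_add_le _ _
      _ ≤ ‖A‖ * ‖A ^ n - B ^ n‖ + ‖A - B‖ * ‖B ^ n‖ :=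
          add_le_add (norm_mul_le _ _) (norm_mul_le _ _)
      _ ≤ 1 * (n * ‖A - B‖) + ‖A - B‖ * 1 := by
          refine add_le_add (mul_le_mul hA ih (norm_nonneg _) zero_le_one) ?_
          exact mul_le_mul_of_nonneg_left (hBp n) hd
      _ = (n + 1 : ℕ) * ‖A - B‖ := by push_cast; ring

-- unitary norm bound
lemma chernoff_aux_norm_exp_le_one {𝓗 : Type*} [NormedAddCommGroup 𝓗] [InnerProductSpace ℂ 𝓗]
    [CompleteSpace 𝓗] (H : 𝓗 →L[ℂ] 𝓗) (hH : IsSelfAdjoint H) (s : ℝ) :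
    ‖exp (Complex.I • (s : ℂ) • H)‖ ≤ 1 := by
  set X : 𝓗 →L[ℂ] 𝓗 := Complex.I • (s : ℂ) • H with hX
  have hskew : X ∈ skewAdjoint (𝓗 →L[ℂ] 𝓗) := by
    rw [skewAdjoint.mem_iff, hX, smul_smul, star_smul, hH.star_eq]
    have : star (Complex.I * (s : ℂ)) = -(Complex.I * (s : ℂ)) := by
      simp [Complex.ext_iff]
    rw [this, neg_smul]
  let +nondep : NormedAlgebra ℚ (𝓗 →L[ℂ] 𝓗) := .restrictScalars ℚ ℂ _
  have hu : exp X ∈ unitary (𝓗 →L[ℂ] 𝓗) := exp_mem_unitary_of_mem_skewAdjoint hskew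
  have h2 : ‖exp X‖ * ‖exp X‖ = ‖star (exp X) * exp X‖ :=
    (CStarRing.norm_star_mul_self).symm
  have h3 : star (exp X) * exp X = 1 := (Unitary.mem_iff.mp hu).1
  rw [h3] at h2
  have h4 : ‖(1 : 𝓗 →L[ℂ] 𝓗)‖ ≤ 1 := ContinuousLinearMap.norm_id_le
  nlinarith [norm_nonneg (exp X)]


set_option maxHeartbeats 1600000 in
/-- Chernoff equivalence of the averaged unitary group `e^{itH̄}`, `H̄ = p₁H₁ + p₂H₂`,
and the expectation `F t = p₁ e^{itH₁} + p₂ e^{itH₂}` of the random unitary group: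
`(F (t/n))^n u → e^{itH̄} u` uniformly on `[0,T]`. -/
theorem chernoff_equivalence_two_valued_random_hamiltonian
    {𝓗 : Type*} [NormedAddCommGroup 𝓗] [InnerProductSpace ℂ 𝓗] [CompleteSpace 𝓗]
    (H₁ H₂ : 𝓗 →L[ℂ] 𝓗) (hH₁ : IsSelfAdjoint H₁) (hH₂ : IsSelfAdjoint H₂)
    (p₁ p₂ : ℝ) (hp₁ : 0 ≤ p₁) (hp₂ : 0 ≤ p₂) (hp : p₁ + p₂ = 1)
    (F : ℝ → 𝓗 →L[ℂ] 𝓗)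
    (hF : ∀ t : ℝ, F t
        = (p₁ : ℂ) • NormedSpace.exp (Complex.I • (t : ℂ) • H₁)
          + (p₂ : ℂ) • NormedSpace.exp (Complex.I • (t : ℂ) • H₂)) :
    ∀ u : 𝓗, ∀ T > (0 : ℝ), ∀ ε > (0 : ℝ), ∃ N : ℕ, ∀ n ≥ N,
      ∀ t ∈ Set.Icc (0 : ℝ) T,
        ‖NormedSpace.exp (Complex.I • (t : ℂ) • ((p₁ : ℂ) • H₁ + (p₂ : ℂ) • H₂)) u
          - ((F (t / n)) ^ n) u‖ ≤ ε := by
  intro u T hT ε hε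
  set HC : 𝓗 →L[ℂ] 𝓗 := (p₁ : ℂ) • H₁ + (p₂ : ℂ) • H₂ with hHCdef
  have hHCsa : IsSelfAdjoint HC := by
    rw [IsSelfAdjoint, hHCdef, star_add, star_smul, star_smul, hH₁.star_eq, hH₂.star_eq]
    simp [Complex.conj_ofReal]
  set M : ℝ := max ‖H₁‖ ‖H₂‖ with hMdef
  have hM0 : 0 ≤ M := le_trans (norm_nonneg H₁) (le_max_left _ _)
  have hHC : ‖HC‖ ≤ M := by
    calc ‖HC‖ ≤ ‖(p₁ : ℂ) • H₁‖ + ‖(p₂ : ℂ) • H₂‖ := norm_add_le _ _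
      _ = p₁ * ‖H₁‖ + p₂ * ‖H₂‖ := by
          simp [norm_smul, Complex.norm_real, abs_of_nonneg hp₁, abs_of_nonneg hp₂]
      _ ≤ p₁ * M + p₂ * M := by
          gcongr
          · exact le_max_left _ _
          · exact le_max_right _ _
      _ = M := by rw [← add_mul, hp, one_mul]
  set K : ℝ := 2 * T ^ 2 * M ^ 2 * Real.exp (T * M) * ‖u‖ with hKdef
  have hK0 : 0 ≤ K := by positivity
  refine ⟨max 1 ⌈K / ε⌉₊, fun n hn t ht => ?_⟩
  have hn1 : 1 ≤ n := le_trans (le_max_left _ _) hn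
  have hnR : (1 : ℝ) ≤ n := by exact_mod_cast hn1
  have hn0 : (0 : ℝ) < n := by linarith
  set s : ℝ := t / n with hsdef
  have hs0 : 0 ≤ s := div_nonneg ht.1 (le_of_lt hn0)
  have hsT : s ≤ T := le_trans (div_le_self ht.1 hnR) ht.2
  set A : 𝓗 →L[ℂ] 𝓗 := exp (Complex.I • (s : ℂ) • HC) with hAdef
  set B : 𝓗 →L[ℂ] 𝓗 := F s with hBdef
  -- A ^ n is the full group
  have hpow : exp (Complex.I • (t : ℂ) • HC) = A ^ n := by
    let +nondep : NormedAlgebra ℚ (𝓗 →L[ℂ] 𝓗) := .restrictScalars ℚ ℂ _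
    rw [hAdef, ← exp_nsmul]
    congr 1
    rw [← Nat.cast_smul_eq_nsmul ℂ n, smul_comm ((n : ℂ)) Complex.I, smul_smul ((n : ℂ))]
    congr 2
    have hne : (n : ℂ) ≠ 0 := Nat.cast_ne_zero.mpr (by omega)
    rw [hsdef]
    push_cast
    rw [mul_div_cancel₀ _ hne]
  -- norms ≤ 1
  have hA1 : ‖A‖ ≤ 1 := chernoff_aux_norm_exp_le_one HC hHCsa s
  have hB1 : ‖B‖ ≤ 1 := by
    rw [hBdef, hF s]
    calc ‖(p₁ : ℂ) • exp (Complex.I • (s : ℂ) • H₁)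
            + (p₂ : ℂ) • exp (Complex.I • (s : ℂ) • H₂)‖
        ≤ ‖(p₁ : ℂ) • exp (Complex.I • (s : ℂ) • H₁)‖
            + ‖(p₂ : ℂ) • exp (Complex.I • (s : ℂ) • H₂)‖ := norm_add_le _ _
      _ = p₁ * ‖exp (Complex.I • (s : ℂ) • H₁)‖
            + p₂ * ‖exp (Complex.I • (s : ℂ) • H₂)‖ := by
          simp [norm_smul, Complex.norm_real, abs_of_nonneg hp₁, abs_of_nonneg hp₂]
      _ ≤ p₁ * 1 + p₂ * 1 := by
          gcongr
          · exact chernoff_aux_norm_exp_le_one H₁ hH₁ s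
          · exact chernoff_aux_norm_exp_le_one H₂ hH₂ s
      _ = 1 := by rw [mul_one, mul_one, hp]
  -- quadratic closeness
  set X0 : 𝓗 →L[ℂ] 𝓗 := Complex.I • (s : ℂ) • HC with hX0def
  set X1 : 𝓗 →L[ℂ] 𝓗 := Complex.I • (s : ℂ) • H₁ with hX1def
  set X2 : 𝓗 →L[ℂ] 𝓗 := Complex.I • (s : ℂ) • H₂ with hX2def
  have hXn : ∀ (X : 𝓗 →L[ℂ] 𝓗) (H : 𝓗 →L[ℂ] 𝓗), X = Complex.I • (s : ℂ) • H → ‖H‖ ≤ M →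
      ‖X‖ ≤ s * M := by
    intro X H hXH hHM
    rw [hXH]
    calc ‖Complex.I • (s : ℂ) • H‖ = ‖Complex.I‖ * (‖(s : ℂ)‖ * ‖H‖) := by
          rw [norm_smul, norm_smul]
      _ = s * ‖H‖ := by simp [Complex.norm_real, abs_of_nonneg hs0]
      _ ≤ s * M := by gcongr
  have hX0n : ‖X0‖ ≤ s * M := hXn X0 HC hX0def hHC
  have hX1n : ‖X1‖ ≤ s * M := hXn X1 H₁ hX1def (le_max_left _ _)
  have hX2n : ‖X2‖ ≤ s * M := hXn X2 H₂ hX2def (le_max_right _ _)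
  have hEbound : ∀ (X : 𝓗 →L[ℂ] 𝓗), ‖X‖ ≤ s * M →
      ‖exp X - 1 - X‖ ≤ (s * M) ^ 2 * Real.exp (s * M) := by
    intro X hX
    refine (chernoff_aux_exp_bound X).trans ?_
    gcongr
  -- key algebraic identity
  have hX0split : X0 = (p₁ : ℂ) • X1 + (p₂ : ℂ) • X2 := by
    rw [hX0def, hX1def, hX2def, hHCdef, smul_add, smul_add]
    congr 1 <;> simp only [smul_smul] <;> congr 1 <;> ring
  have hone : (1 : 𝓗 →L[ℂ] 𝓗) = (p₁ : ℂ) • 1 + (p₂ : ℂ) • 1 := by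
    rw [← add_smul]
    norm_cast
    rw [hp, one_smul]
  have hps : (1 : ℂ) - (p₁ : ℂ) - (p₂ : ℂ) = 0 := by
    norm_cast
    rw [sub_sub, hp, sub_self]
  have hdiff : A - B - ((exp X0 - 1 - X0)
      - (p₁ : ℂ) • (exp X1 - 1 - X1) - (p₂ : ℂ) • (exp X2 - 1 - X2))
      = ((1 : ℂ) - (p₁ : ℂ) - (p₂ : ℂ)) • (1 : 𝓗 →L[ℂ] 𝓗) := by
    rw [hAdef, hBdef, hF s, ← hX1def, ← hX2def, hX0split]
    module
  have hABid : A - B = (exp X0 - 1 - X0)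
      - (p₁ : ℂ) • (exp X1 - 1 - X1) - (p₂ : ℂ) • (exp X2 - 1 - X2) := by
    rw [hps, zero_smul] at hdiff
    exact sub_eq_zero.mp hdiff
  have hAB : ‖A - B‖ ≤ 2 * ((s * M) ^ 2 * Real.exp (s * M)) := by
    rw [hABid]
    calc ‖exp X0 - 1 - X0 - (p₁ : ℂ) • (exp X1 - 1 - X1)
            - (p₂ : ℂ) • (exp X2 - 1 - X2)‖
        ≤ ‖exp X0 - 1 - X0 - (p₁ : ℂ) • (exp X1 - 1 - X1)‖
            + ‖(p₂ : ℂ) • (exp X2 - 1 - X2)‖ := norm_sub_le _ _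
      _ ≤ ‖exp X0 - 1 - X0‖ + ‖(p₁ : ℂ) • (exp X1 - 1 - X1)‖
            + ‖(p₂ : ℂ) • (exp X2 - 1 - X2)‖ := by
          gcongr
          exact norm_sub_le _ _
      _ = ‖exp X0 - 1 - X0‖ + p₁ * ‖exp X1 - 1 - X1‖ + p₂ * ‖exp X2 - 1 - X2‖ := by
          simp [norm_smul, Complex.norm_real, abs_of_nonneg hp₁, abs_of_nonneg hp₂]
      _ ≤ (s * M) ^ 2 * Real.exp (s * M) + p₁ * ((s * M) ^ 2 * Real.exp (s * M))
            + p₂ * ((s * M) ^ 2 * Real.exp (s * M)) := by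
          gcongr
          · exact hEbound X0 hX0n
          · exact hEbound X1 hX1n
          · exact hEbound X2 hX2n
      _ = (1 + (p₁ + p₂)) * ((s * M) ^ 2 * Real.exp (s * M)) := by ring
      _ = 2 * ((s * M) ^ 2 * Real.exp (s * M)) := by rw [hp]; norm_num
  -- assemble
  have hpown : ‖A ^ n - B ^ n‖ ≤ n * ‖A - B‖ :=
    chernoff_aux_pow_sub_pow ContinuousLinearMap.norm_id_le A B hA1 hB1 n
  have main : ‖exp (Complex.I • (t : ℂ) • HC) u - ((F s) ^ n) u‖ ≤ K / n := by
    rw [hpow, ← hBdef]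
    have h1 : ‖(A ^ n) u - (B ^ n) u‖ = ‖((A ^ n - B ^ n)) u‖ := by
      simp [ContinuousLinearMap.sub_apply]
    rw [h1]
    calc ‖((A ^ n - B ^ n)) u‖ ≤ ‖A ^ n - B ^ n‖ * ‖u‖ :=
          ContinuousLinearMap.le_opNorm _ u
      _ ≤ (n * ‖A - B‖) * ‖u‖ := by gcongr
      _ ≤ (n * (2 * ((s * M) ^ 2 * Real.exp (s * M)))) * ‖u‖ := by gcongr
      _ = 2 * t ^ 2 * M ^ 2 * Real.exp (s * M) * ‖u‖ / n := by
          rw [hsdef]; field_simp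
      _ ≤ K / n := by
          rw [hKdef]
          gcongr <;> first
            | exact ht.1
            | exact ht.2
            | exact hsT
            | exact hM0
            | positivity
  refine main.trans ?_
  rw [div_le_iff₀ hn0]
  have hceil : (K / ε : ℝ) ≤ n := by
    calc (K / ε : ℝ) ≤ (⌈K / ε⌉₊ : ℝ) := Nat.le_ceil _
      _ ≤ n := by exact_mod_cast le_trans (le_max_right 1 _) hn
  calc K ≤ (K / ε) * ε := by rw [div_mul_cancel₀ _ (ne_of_gt hε)]
    _ ≤ n * ε := by gcongr
    _ = ε * n := mul_comm _ _
end

section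
/- Let ξ be a real-valued random variable with E[ξ] = 0, E[ξ²] = σ², and E[|ξ|³] < ∞. Define F(t) on the space of bounded uniformly continuous functions with two bounded uniformly continuous derivatives by F(t)f(x) = E[f(x − √t·ξ)] for t ≥ 0. Then for every such f, lim_{t→0⁺} ‖(F(t)f − f)/t − (σ²/2) f''‖_∞ = 0, i.e. F'(0) = (σ²/2) d²/dx² on this space. -/
open MeasureTheory

private lemma mvt_abs_aux {g g' : ℝ → ℝ} (hg : ∀ u, HasDerivAt g (g' u) u) {h C : ℝ}
    (hC : ∀ u, |u| ≤ |h| → |g' u| ≤ C) : |g h - g 0| ≤ C * |h| := by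
  have hs : Convex ℝ (Set.Icc (-|h|) |h|) := convex_Icc _ _
  have key := hs.norm_image_sub_le_of_norm_hasDerivWithin_le
    (f := g) (f' := g')
    (fun u _ => (hg u).hasDerivWithinAt)
    (fun u hu => hC u (abs_le.mpr ⟨neg_le.mp (neg_le.mpr hu.1), hu.2⟩))
    (x := 0) (y := h)
    ⟨neg_nonpos.mpr (abs_nonneg h), abs_nonneg h⟩
    ⟨neg_abs_le h, le_abs_self h⟩
  simpa [Real.norm_eq_abs] using key

private lemma taylor2_bound_aux (f : ℝ → ℝ) (hf : ContDiff ℝ 2 f) (x h K : ℝ)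
    (hK : ∀ u, |u| ≤ |h| → |deriv (deriv f) (x + u) - deriv (deriv f) x| ≤ K) :
    |f (x + h) - f x - h * deriv f x - h ^ 2 / 2 * deriv (deriv f) x| ≤ K * h ^ 2 := by
  have hdf : Differentiable ℝ f := hf.differentiable (by simp)
  have h1 : ContDiff ℝ 1 (deriv f) := by
    have h2 : ContDiff ℝ (1 + 1) f := by exact_mod_cast hf
    exact (contDiff_succ_iff_deriv.mp h2).2.2
  have hdf' : Differentiable ℝ (deriv f) := h1.differentiable (by simp)
  set A := deriv (deriv f) x with hA
  set B := deriv f x with hB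
  set g : ℝ → ℝ := fun u => f (x + u) - f x - u * B - u ^ 2 / 2 * A with hgdef
  set g' : ℝ → ℝ := fun u => deriv f (x + u) - B - u * A with hg'def
  have hshiftf : ∀ u : ℝ, HasDerivAt (fun u => f (x + u)) (deriv f (x + u)) u := by
    intro u
    have := ((hdf (x + u)).hasDerivAt).comp u ((hasDerivAt_id u).const_add x)
    rw [mul_one] at this; exact this
  have hshiftf' : ∀ u : ℝ, HasDerivAt (fun u => deriv f (x + u)) (deriv (deriv f) (x + u)) u := by
    intro u
    have := ((hdf' (x + u)).hasDerivAt).comp u ((hasDerivAt_id u).const_add x)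
    rw [mul_one] at this; exact this
  have hg : ∀ u, HasDerivAt g (g' u) u := by
    intro u
    have h3 : HasDerivAt (fun u : ℝ => u * B) B u := by
      simpa using (hasDerivAt_id u).mul_const B
    have h4 : HasDerivAt (fun u : ℝ => u ^ 2 / 2 * A) (u * A) u := by
      have := ((hasDerivAt_pow 2 u).div_const 2).mul_const A
      have e : ((↑(2:ℕ) : ℝ) * u ^ (2 - 1) / 2 * A) = u * A := by norm_num
      rw [e] at this; exact this
    exact (((hshiftf u).sub_const (f x)).sub h3).sub h4
  have hg' : ∀ u, HasDerivAt g' (deriv (deriv f) (x + u) - A) u := by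
    intro u
    have h3 : HasDerivAt (fun u : ℝ => u * A) A u := by
      simpa using (hasDerivAt_id u).mul_const A
    exact ((hshiftf' u).sub_const B).sub h3
  have hK0 : 0 ≤ K := by simpa [hA] using hK 0 (by simp)
  have step1 : ∀ u, |u| ≤ |h| → |g' u| ≤ K * |h| := by
    intro u hu
    have g'0 : g' 0 = 0 := by simp [hg'def, hB]
    have := mvt_abs_aux hg' (h := u) (C := K) (fun v hv => hK v (hv.trans hu))
    rw [g'0, sub_zero] at this
    exact this.trans (mul_le_mul_of_nonneg_left hu hK0)
  have step2 := mvt_abs_aux hg step1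
  have g0 : g 0 = 0 := by simp [hgdef]
  rw [g0, sub_zero] at step2
  have : K * |h| * |h| = K * h ^ 2 := by
    rw [mul_assoc, abs_mul_abs_self]; ring
  rw [this] at step2
  simpa [hgdef] using step2

set_option maxHeartbeats 1000000 in
/-- Central-limit realization of Chernoff's theorem: for a centered random variable `ξ`
with variance `σ²` and finite third absolute moment, the expected shift operator
`F t f x = E[f (x − √t ξ)]`, acting on bounded uniformly continuous functions with two
bounded uniformly continuous derivatives, satisfies
`(F t f − f)/t → (σ²/2) f''` in the sup norm as `t → 0⁺`. -/
theorem expected_shift_derivative_is_half_variance_laplacian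
    {Ω : Type*} [MeasurableSpace Ω] (P : Measure Ω) [IsProbabilityMeasure P]
    (ξ : Ω → ℝ) (hmeas : Measurable ξ) (σ : ℝ)
    (hmean : ∫ ω, ξ ω ∂P = 0)
    (hvar : ∫ ω, (ξ ω) ^ 2 ∂P = σ ^ 2)
    (hthird : Integrable (fun ω => |ξ ω| ^ 3) P)
    (f : ℝ → ℝ)
    (hfC2 : ContDiff ℝ 2 f)
    (hfbd : ∃ C, ∀ x, |f x| ≤ C) (hfu : UniformContinuous f)
    (hf'bd : ∃ C, ∀ x, |deriv f x| ≤ C) (hf'u : UniformContinuous (deriv f))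
    (hf''bd : ∃ C, ∀ x, |deriv (deriv f) x| ≤ C)
    (hf''u : UniformContinuous (deriv (deriv f))) :
    ∀ ε > (0 : ℝ), ∃ δ > (0 : ℝ), ∀ t : ℝ, 0 < t → t < δ → ∀ x : ℝ,
      |((∫ ω, f (x - Real.sqrt t * ξ ω) ∂P) - f x) / t
        - σ ^ 2 / 2 * deriv (deriv f) x| ≤ ε := by
  intro ε hε
  obtain ⟨C₀, hC₀⟩ := hfbd
  obtain ⟨C₂, hC₂⟩ := hf''bd
  have hC₂0 : 0 ≤ C₂ := (abs_nonneg _).trans (hC₂ 0)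
  have hσ2 : (0:ℝ) ≤ σ ^ 2 := sq_nonneg σ
  set ε' := ε / (2 * (σ ^ 2 + 1)) with hε'def
  have hε'pos : 0 < ε' := by positivity
  obtain ⟨δ₀, hδ₀pos, hδ₀⟩ := Metric.uniformContinuous_iff.mp hf''u ε' hε'pos
  set M := ∫ ω, |ξ ω| ^ 3 ∂P with hMdef
  have hM0 : 0 ≤ M := integral_nonneg fun ω => by positivity
  set c := 2 * C₂ / δ₀ with hcdef
  have hc0 : 0 ≤ c := by positivity
  refine ⟨min 1 ((ε / (2 * (c * M + 1))) ^ 2), lt_min one_pos (by positivity), ?_⟩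
  intro t ht htδ x
  -- integrability facts
  have hξint : Integrable ξ P := by
    refine (hthird.add (integrable_const 1)).mono' hmeas.aestronglyMeasurable
      (Filter.Eventually.of_forall fun ω => ?_)
    rw [Real.norm_eq_abs]
    simp only [Pi.add_apply]
    nlinarith [abs_nonneg (ξ ω), sq_nonneg (|ξ ω| - 1),
      mul_nonneg (abs_nonneg (ξ ω)) (sq_nonneg (|ξ ω| - 1))]
  have hξ2int : Integrable (fun ω => ξ ω ^ 2) P := by
    refine (hthird.add (integrable_const 1)).mono' (hmeas.pow_const 2).aestronglyMeasurable
      (Filter.Eventually.of_forall fun ω => ?_)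
    rw [Real.norm_eq_abs, abs_pow]
    simp only [Pi.add_apply]
    nlinarith [abs_nonneg (ξ ω), sq_nonneg (|ξ ω| - 1),
      mul_nonneg (abs_nonneg (ξ ω)) (sq_nonneg (|ξ ω| - 1))]
  set s := Real.sqrt t with hsdef
  have hs0 : 0 ≤ s := Real.sqrt_nonneg t
  have hs2 : s ^ 2 = t := Real.sq_sqrt ht.le
  have hfint : Integrable (fun ω => f (x - s * ξ ω)) P := by
    refine (integrable_const C₀).mono'
      ((hfC2.continuous.measurable.comp
        (measurable_const.sub (measurable_const.mul hmeas))).aestronglyMeasurable)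
      (Filter.Eventually.of_forall fun ω => ?_)
    rw [Real.norm_eq_abs]; exact hC₀ _
  set A := deriv (deriv f) x with hAdef
  set B := deriv f x with hBdef
  -- pointwise Taylor bound
  have key : ∀ ω, |f (x - s * ξ ω) - f x + s * ξ ω * B - t * ξ ω ^ 2 / 2 * A|
      ≤ (ε' * t) * ξ ω ^ 2 + (c * (t * s)) * |ξ ω| ^ 3 := by
    intro ω
    set h : ℝ := -(s * ξ ω) with hhdef
    have hhabs : |h| = s * |ξ ω| := by
      rw [hhdef, abs_neg, abs_mul, abs_of_nonneg hs0]
    have hh2 : h ^ 2 = t * ξ ω ^ 2 := by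
      have : h ^ 2 = s ^ 2 * ξ ω ^ 2 := by rw [hhdef]; ring
      rw [this, hs2]
    have e : f (x - s * ξ ω) - f x + s * ξ ω * B - t * ξ ω ^ 2 / 2 * A
        = f (x + h) - f x - h * B - h ^ 2 / 2 * A := by
      rw [hh2, hhdef]; ring_nf
    have hterm2 : 0 ≤ (c * (t * s)) * |ξ ω| ^ 3 := by positivity
    by_cases hcase : |h| < δ₀
    · have tb := taylor2_bound_aux f hfC2 x h ε' (fun u hu => by
        have hd : dist (x + u) x < δ₀ := by
          rw [Real.dist_eq]
          simpa using lt_of_le_of_lt hu hcase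
        exact (hδ₀ hd).le)
      rw [e]
      refine tb.trans ?_
      calc ε' * h ^ 2 = (ε' * t) * ξ ω ^ 2 := by rw [hh2]; ring
        _ ≤ (ε' * t) * ξ ω ^ 2 + (c * (t * s)) * |ξ ω| ^ 3 := le_add_of_nonneg_right hterm2
    · push_neg at hcase
      have tb := taylor2_bound_aux f hfC2 x h (2 * C₂) (fun u _ => by
        calc |deriv (deriv f) (x + u) - A| ≤ |deriv (deriv f) (x + u)| + |A| := abs_sub _ _
        _ ≤ C₂ + C₂ := add_le_add (hC₂ _) (hC₂ x)
        _ = 2 * C₂ := by ring)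
      rw [e]
      refine tb.trans ?_
      -- 2C₂ h² ≤ c t s |ξ|³ given δ₀ ≤ |h| = s|ξ|
      have hcδ : c * δ₀ = 2 * C₂ := div_mul_cancel₀ _ (ne_of_gt hδ₀pos)
      rw [hhabs] at hcase
      have h1 : δ₀ * |ξ ω| ^ 2 ≤ s * |ξ ω| ^ 3 :=
        calc δ₀ * |ξ ω| ^ 2 ≤ s * |ξ ω| * |ξ ω| ^ 2 :=
              mul_le_mul_of_nonneg_right hcase (sq_nonneg _)
          _ = s * |ξ ω| ^ 3 := by ring
      have h2 : c * t * (δ₀ * |ξ ω| ^ 2) ≤ c * t * (s * |ξ ω| ^ 3) :=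
        mul_le_mul_of_nonneg_left h1 (mul_nonneg hc0 ht.le)
      have hsq : |ξ ω| ^ 2 = ξ ω ^ 2 := sq_abs _
      have h3 : 2 * C₂ * (t * ξ ω ^ 2) = c * t * (δ₀ * |ξ ω| ^ 2) := by
        rw [← hsq, ← hcδ]; ring
      have h4 : 0 ≤ (ε' * t) * ξ ω ^ 2 :=
        mul_nonneg (mul_nonneg hε'pos.le ht.le) (sq_nonneg _)
      calc 2 * C₂ * h ^ 2 = c * t * (δ₀ * |ξ ω| ^ 2) := by rw [hh2]; exact h3
        _ ≤ c * t * (s * |ξ ω| ^ 3) := h2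
        _ = (c * (t * s)) * |ξ ω| ^ 3 := by ring
        _ ≤ (ε' * t) * ξ ω ^ 2 + (c * (t * s)) * |ξ ω| ^ 3 := le_add_of_nonneg_left h4
    -- end key
  -- integrability of the remainder and of the bound
  have hRint : Integrable (fun ω => f (x - s * ξ ω) - f x + s * ξ ω * B - t * ξ ω ^ 2 / 2 * A) P := by
    exact (((hfint.sub (integrable_const (f x))).add
      ((hξint.const_mul s).mul_const B)).sub
      (((hξ2int.const_mul t).div_const 2).mul_const A))
  have hbint : Integrable (fun ω => (ε' * t) * ξ ω ^ 2 + (c * (t * s)) * |ξ ω| ^ 3) P :=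
    (hξ2int.const_mul _).add (hthird.const_mul _)
  -- value of the integral of the remainder
  have hI : ∫ ω, (f (x - s * ξ ω) - f x + s * ξ ω * B - t * ξ ω ^ 2 / 2 * A) ∂P
      = (∫ ω, f (x - s * ξ ω) ∂P) - f x - t * σ ^ 2 / 2 * A := by
    have i1 : Integrable (fun ω => f (x - s * ξ ω) - f x) P := hfint.sub (integrable_const _)
    have i2 : Integrable (fun ω => s * ξ ω * B) P := (hξint.const_mul s).mul_const B
    have i12 : Integrable (fun ω => f (x - s * ξ ω) - f x + s * ξ ω * B) P := i1.add i2
    have i3 : Integrable (fun ω => t * ξ ω ^ 2 / 2 * A) P :=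
      ((hξ2int.const_mul t).div_const 2).mul_const A
    rw [integral_sub i12 i3, integral_add i1 i2, integral_sub hfint (integrable_const (f x)),
      integral_mul_const, integral_const_mul, hmean,
      integral_mul_const, integral_div, integral_const_mul, hvar,
      integral_const]
    simp [measure_univ]
  -- integral bound
  have hIb : |∫ ω, (f (x - s * ξ ω) - f x + s * ξ ω * B - t * ξ ω ^ 2 / 2 * A) ∂P|
      ≤ (ε' * t) * σ ^ 2 + (c * (t * s)) * M := by
    calc |∫ ω, (f (x - s * ξ ω) - f x + s * ξ ω * B - t * ξ ω ^ 2 / 2 * A) ∂P|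
        ≤ ∫ ω, |f (x - s * ξ ω) - f x + s * ξ ω * B - t * ξ ω ^ 2 / 2 * A| ∂P :=
          by exact
            norm_integral_le_integral_norm
              (fun ω => f (x - s * ξ ω) - f x + s * ξ ω * B - t * ξ ω ^ 2 / 2 * A) (μ := P)
      _ ≤ ∫ ω, ((ε' * t) * ξ ω ^ 2 + (c * (t * s)) * |ξ ω| ^ 3) ∂P :=
          integral_mono hRint.abs hbint key
      _ = (ε' * t) * σ ^ 2 + (c * (t * s)) * M := by
          rw [integral_add (hξ2int.const_mul _) (hthird.const_mul _),
            integral_const_mul, integral_const_mul, hvar, hMdef]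
  -- rewrite the goal expression
  have ht0 : t ≠ 0 := ne_of_gt ht
  have egoal : ((∫ ω, f (x - s * ξ ω) ∂P) - f x) / t - σ ^ 2 / 2 * A
      = (∫ ω, (f (x - s * ξ ω) - f x + s * ξ ω * B - t * ξ ω ^ 2 / 2 * A) ∂P) / t := by
    rw [hI]; field_simp
  rw [egoal, abs_div, abs_of_pos ht]
  rw [div_le_iff₀ ht]
  -- final numeric bound
  have hε'σ : ε' * σ ^ 2 ≤ ε / 2 := by
    have : ε' * (2 * (σ ^ 2 + 1)) = ε := by
      rw [hε'def]; field_simp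
    nlinarith
  have hd : 0 < ε / (2 * (c * M + 1)) := by positivity
  have hslt : s < ε / (2 * (c * M + 1)) := by
    rw [hsdef]
    exact (Real.sqrt_lt' hd).mpr (lt_of_lt_of_le htδ (min_le_right _ _))
  have hcsM : c * s * M ≤ ε / 2 := by
    have heq : (ε / (2 * (c * M + 1))) * (2 * (c * M + 1)) = ε := by field_simp
    nlinarith [mul_le_mul_of_nonneg_left hslt.le (mul_nonneg hc0 hM0)]
  calc |∫ ω, (f (x - s * ξ ω) - f x + s * ξ ω * B - t * ξ ω ^ 2 / 2 * A) ∂P|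
      ≤ (ε' * t) * σ ^ 2 + (c * (t * s)) * M := hIb
    _ = (ε' * σ ^ 2 + c * s * M) * t := by ring
    _ ≤ ε * t := by
        have hle : ε' * σ ^ 2 + c * s * M ≤ ε := by linarith
        exact mul_le_mul_of_nonneg_right hle ht.le
end

section
/- Let A, B be bounded self-adjoint operators on a complex Hilbert space 𝔥. Then for every u ∈ 𝔥 and T > 0, lim_{n→∞} sup_{t∈[0,T]} ‖(e^{i(t/n)A} e^{i(t/n)B})ⁿ u − e^{it(A+B)} u‖ = 0. -/
section TrotterAux

open NormedSpace Finset

variable {𝔸 : Type*} [NormedRing 𝔸] [NormedAlgebra ℂ 𝔸] [CompleteSpace 𝔸]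

lemma trotter_exp_tail (X : 𝔸) (k : ℕ) (hk : 0 < k) :
    ‖exp X - ∑ i ∈ range k, (i.factorial⁻¹ : ℂ) • X ^ i‖ ≤ ‖X‖ ^ k * Real.exp ‖X‖ := by
  have hs : Summable (fun n => (n.factorial⁻¹ : ℂ) • X ^ n) := expSeries_summable' X
  have h1 : exp X = (∑ i ∈ range k, (i.factorial⁻¹ : ℂ) • X ^ i)
      + ∑' n : ℕ, ((n + k).factorial⁻¹ : ℂ) • X ^ (n + k) := by
    rw [exp_eq_tsum ℂ]
    exact (Summable.sum_add_tsum_nat_add k hs).symm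
  rw [h1, add_sub_cancel_left]
  have hbound : ∀ n : ℕ, ‖((n + k).factorial⁻¹ : ℂ) • X ^ (n + k)‖
      ≤ ‖X‖ ^ k * (‖X‖ ^ n / n.factorial) := by
    intro n
    rw [norm_smul]
    have h2 : ‖((n + k).factorial⁻¹ : ℂ)‖ = ((n + k).factorial : ℝ)⁻¹ := by
      rw [show ((n + k).factorial⁻¹ : ℂ) = (((n+k).factorial : ℂ))⁻¹ by push_cast; ring,
        norm_inv, Complex.norm_natCast]
    rw [h2]
    have hfac : ((n + k).factorial : ℝ)⁻¹ ≤ (n.factorial : ℝ)⁻¹ := by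
      apply inv_anti₀ (by positivity)
      exact_mod_cast Nat.factorial_le (Nat.le_add_right n k)
    calc ((n + k).factorial : ℝ)⁻¹ * ‖X ^ (n + k)‖
        ≤ (n.factorial : ℝ)⁻¹ * ‖X‖ ^ (n + k) := by
          exact mul_le_mul hfac (norm_pow_le' X (Nat.add_pos_right n hk)) (norm_nonneg _)
            (by positivity)
      _ = ‖X‖ ^ k * (‖X‖ ^ n / n.factorial) := by rw [pow_add]; ring
  have hsum2 : Summable (fun n : ℕ => ‖X‖ ^ k * (‖X‖ ^ n / n.factorial)) :=
    (Real.summable_pow_div_factorial ‖X‖).mul_left _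
  calc ‖∑' n : ℕ, ((n + k).factorial⁻¹ : ℂ) • X ^ (n + k)‖
      ≤ ∑' n : ℕ, ‖X‖ ^ k * (‖X‖ ^ n / n.factorial) := by
        exact tsum_of_norm_bounded hsum2.hasSum hbound
    _ = ‖X‖ ^ k * ∑' n : ℕ, ‖X‖ ^ n / n.factorial := tsum_mul_left
    _ = ‖X‖ ^ k * Real.exp ‖X‖ := by
        congr 1
        rw [Real.exp_eq_exp_ℝ, exp_eq_tsum_div]

lemma trotter_exp_one_sub (X : 𝔸) : ‖exp X - 1‖ ≤ ‖X‖ * Real.exp ‖X‖ := by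
  have := trotter_exp_tail X 1 one_pos
  simpa using this

lemma trotter_exp_two_sub (X : 𝔸) : ‖exp X - 1 - X‖ ≤ ‖X‖ ^ 2 * Real.exp ‖X‖ := by
  have := trotter_exp_tail X 2 two_pos
  simpa [Finset.sum_range_succ, sub_sub] using this

set_option maxHeartbeats 1000000 in
lemma trotter_exp_prod_sub (X Y : 𝔸) (hone : ‖(1 : 𝔸)‖ ≤ 1) :
    ‖exp X * exp Y - exp (X + Y)‖
      ≤ 5 * (‖X‖ + ‖Y‖) ^ 2 * Real.exp (2 * (‖X‖ + ‖Y‖)) := by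
  set a := ‖X‖ with ha
  set b := ‖Y‖ with hb
  have ha0 : 0 ≤ a := norm_nonneg _
  have hb0 : 0 ≤ b := norm_nonneg _
  set E := Real.exp (2 * (a + b)) with hE
  have hkey : exp X * exp Y - exp (X + Y)
      = (exp X - 1 - X) * exp Y + X * (exp Y - 1) + (exp Y - 1 - Y)
        - (exp (X + Y) - 1 - (X + Y)) := by noncomm_ring
  have hEY : ‖exp Y‖ ≤ 1 + b * Real.exp b := by
    calc ‖exp Y‖ = ‖(exp Y - 1) + 1‖ := by rw [sub_add_cancel]
      _ ≤ ‖exp Y - 1‖ + ‖(1 : 𝔸)‖ := norm_add_le _ _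
      _ ≤ b * Real.exp b + 1 := add_le_add (trotter_exp_one_sub Y) hone
      _ = 1 + b * Real.exp b := by ring
  have t1 : ‖(exp X - 1 - X) * exp Y‖ ≤ (a ^ 2 * Real.exp a) * (1 + b * Real.exp b) := by
    calc ‖(exp X - 1 - X) * exp Y‖ ≤ ‖exp X - 1 - X‖ * ‖exp Y‖ := norm_mul_le _ _
      _ ≤ (a ^ 2 * Real.exp a) * (1 + b * Real.exp b) :=
          mul_le_mul (trotter_exp_two_sub X) hEY (norm_nonneg _) (by positivity)
  have t2 : ‖X * (exp Y - 1)‖ ≤ a * (b * Real.exp b) := by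
    calc ‖X * (exp Y - 1)‖ ≤ ‖X‖ * ‖exp Y - 1‖ := norm_mul_le _ _
      _ ≤ a * (b * Real.exp b) := by
          exact mul_le_mul le_rfl (trotter_exp_one_sub Y) (norm_nonneg _) ha0
  have t3 : ‖exp Y - 1 - Y‖ ≤ b ^ 2 * Real.exp b := trotter_exp_two_sub Y
  have t4 : ‖exp (X + Y) - 1 - (X + Y)‖ ≤ (a + b) ^ 2 * Real.exp (a + b) := by
    have h := trotter_exp_two_sub (X + Y)
    have hxy : ‖X + Y‖ ≤ a + b := norm_add_le _ _
    refine h.trans ?_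
    exact mul_le_mul (pow_le_pow_left₀ (norm_nonneg _) hxy 2) (Real.exp_le_exp.2 hxy)
      (Real.exp_pos _).le (by positivity)
  have hsum : ‖exp X * exp Y - exp (X + Y)‖
      ≤ (a ^ 2 * Real.exp a) * (1 + b * Real.exp b) + a * (b * Real.exp b)
        + b ^ 2 * Real.exp b + (a + b) ^ 2 * Real.exp (a + b) := by
    rw [hkey]
    calc ‖_ + _ + _ - _‖ ≤ ‖(exp X - 1 - X) * exp Y + X * (exp Y - 1)
          + (exp Y - 1 - Y)‖ + ‖exp (X + Y) - 1 - (X + Y)‖ := norm_sub_le _ _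
      _ ≤ ‖(exp X - 1 - X) * exp Y + X * (exp Y - 1)‖ + ‖exp Y - 1 - Y‖
          + ‖exp (X + Y) - 1 - (X + Y)‖ := by gcongr; exact norm_add_le _ _
      _ ≤ ‖(exp X - 1 - X) * exp Y‖ + ‖X * (exp Y - 1)‖ + ‖exp Y - 1 - Y‖
          + ‖exp (X + Y) - 1 - (X + Y)‖ := by gcongr; exact norm_add_le _ _
      _ ≤ _ := by gcongr
  refine hsum.trans ?_
  -- now a purely real inequality
  have h1b : (1 : ℝ) ≤ Real.exp b := Real.one_le_exp hb0
  have h1a : (1 : ℝ) ≤ Real.exp a := Real.one_le_exp ha0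
  have hbe : b ≤ Real.exp b := (Real.add_one_le_exp b).trans' (by linarith)
  have hab : Real.exp a * Real.exp b = Real.exp (a + b) := (Real.exp_add a b).symm
  have habE : Real.exp (a + b) ≤ E := Real.exp_le_exp.2 (by linarith)
  have hab2E : Real.exp (a + b) * Real.exp b ≤ E := by
    rw [← Real.exp_add]; exact Real.exp_le_exp.2 (by linarith)
  have hbE : Real.exp b ≤ E := Real.exp_le_exp.2 (by linarith)
  have hexpa : 0 < Real.exp a := Real.exp_pos a
  have hexpb : 0 < Real.exp b := Real.exp_pos b
  have hE0 : 0 < E := Real.exp_pos _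
  have habsq : a ^ 2 ≤ (a + b) ^ 2 := by nlinarith
  have hbbsq : b ^ 2 ≤ (a + b) ^ 2 := by nlinarith
  have habprod : a * b ≤ (a + b) ^ 2 := by nlinarith
  have hc2 : Real.exp a * (1 + b * Real.exp b) ≤ 2 * E := by
    have h1 : Real.exp a * 1 ≤ E := by
      calc Real.exp a * 1 ≤ Real.exp a * Real.exp b := by
            exact mul_le_mul_of_nonneg_left h1b hexpa.le
        _ = Real.exp (a + b) := hab
        _ ≤ E := habE
    have h2 : Real.exp a * (b * Real.exp b) ≤ E := by
      calc Real.exp a * (b * Real.exp b) ≤ Real.exp a * (Real.exp b * Real.exp b) := by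
            apply mul_le_mul_of_nonneg_left _ hexpa.le
            exact mul_le_mul_of_nonneg_right hbe hexpb.le
        _ = Real.exp (a + b) * Real.exp b := by rw [← hab]; ring
        _ ≤ E := hab2E
    nlinarith
  have hT1 : a ^ 2 * Real.exp a * (1 + b * Real.exp b) ≤ 2 * ((a + b) ^ 2 * E) := by
    calc a ^ 2 * Real.exp a * (1 + b * Real.exp b)
        = a ^ 2 * (Real.exp a * (1 + b * Real.exp b)) := by ring
      _ ≤ (a + b) ^ 2 * (2 * E) := by
          apply mul_le_mul habsq hc2 (by positivity) (sq_nonneg _)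
      _ = 2 * ((a + b) ^ 2 * E) := by ring
  have hT2 : a * (b * Real.exp b) ≤ (a + b) ^ 2 * E := by
    calc a * (b * Real.exp b) = (a * b) * Real.exp b := by ring
      _ ≤ (a + b) ^ 2 * E := mul_le_mul habprod hbE hexpb.le (sq_nonneg _)
  have hT3 : b ^ 2 * Real.exp b ≤ (a + b) ^ 2 * E :=
    mul_le_mul hbbsq hbE hexpb.le (sq_nonneg _)
  have hT4 : (a + b) ^ 2 * Real.exp (a + b) ≤ (a + b) ^ 2 * E :=
    mul_le_mul_of_nonneg_left habE (sq_nonneg _)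
  nlinarith

lemma trotter_pow_sub_pow (X Y : 𝔸) (hone : ‖(1 : 𝔸)‖ ≤ 1) (hX : ‖X‖ ≤ 1) (hY : ‖Y‖ ≤ 1)
    (n : ℕ) : ‖X ^ n - Y ^ n‖ ≤ n * ‖X - Y‖ := by
  have hYn : ∀ m : ℕ, ‖Y ^ m‖ ≤ 1 := by
    intro m
    induction m with
    | zero => simpa using hone
    | succ m ih =>
      calc ‖Y ^ (m + 1)‖ = ‖Y * Y ^ m‖ := by rw [pow_succ']
        _ ≤ ‖Y‖ * ‖Y ^ m‖ := norm_mul_le _ _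
        _ ≤ 1 * 1 := mul_le_mul hY ih (norm_nonneg _) zero_le_one
        _ = 1 := one_mul 1
  induction n with
  | zero => simp
  | succ n ih =>
    have hid : X ^ (n + 1) - Y ^ (n + 1) = X * (X ^ n - Y ^ n) + (X - Y) * Y ^ n := by
      rw [pow_succ', pow_succ']; noncomm_ring
    have h1 : ‖X * (X ^ n - Y ^ n)‖ ≤ n * ‖X - Y‖ := by
      calc ‖X * (X ^ n - Y ^ n)‖ ≤ ‖X‖ * ‖X ^ n - Y ^ n‖ := norm_mul_le _ _
        _ ≤ 1 * (n * ‖X - Y‖) := mul_le_mul hX ih (norm_nonneg _) zero_le_one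
        _ = n * ‖X - Y‖ := one_mul _
    have h2 : ‖(X - Y) * Y ^ n‖ ≤ ‖X - Y‖ := by
      calc ‖(X - Y) * Y ^ n‖ ≤ ‖X - Y‖ * ‖Y ^ n‖ := norm_mul_le _ _
        _ ≤ ‖X - Y‖ * 1 := mul_le_mul_of_nonneg_left (hYn n) (norm_nonneg _)
        _ = ‖X - Y‖ := mul_one _
    calc ‖X ^ (n + 1) - Y ^ (n + 1)‖ ≤ ‖X * (X ^ n - Y ^ n)‖ + ‖(X - Y) * Y ^ n‖ := by
          rw [hid]; exact norm_add_le _ _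
      _ ≤ n * ‖X - Y‖ + ‖X - Y‖ := add_le_add h1 h2
      _ = (n + 1 : ℕ) * ‖X - Y‖ := by push_cast; ring

end TrotterAux

open NormedSpace

lemma trotter_norm_exp_smul {𝓗 : Type*} [NormedAddCommGroup 𝓗] [InnerProductSpace ℂ 𝓗]
    [CompleteSpace 𝓗] [Nontrivial 𝓗] (C : 𝓗 →L[ℂ] 𝓗) (hC : IsSelfAdjoint C) (r : ℝ) :
    ‖exp (Complex.I • ((r : ℝ) : ℂ) • C)‖ = 1 := by
  have h1 : IsSelfAdjoint (((r : ℝ) : ℂ) • C) := by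
    rw [IsSelfAdjoint, star_smul, Complex.star_def, Complex.conj_ofReal, hC.star_eq]
  let +nondep : NormedAlgebra ℚ (𝓗 →L[ℂ] 𝓗) := .restrictScalars ℚ ℂ _
  have h2 := exp_mem_unitary_of_mem_skewAdjoint (h1.smul_mem_skewAdjoint Complex.conj_I)
  exact CStarRing.norm_of_mem_unitary h2

set_option maxHeartbeats 1000000 in
/-- The Trotter product formula for bounded self-adjoint operators:
`(e^{i(t/n)A} e^{i(t/n)B})ⁿ u → e^{it(A+B)} u` uniformly in `t ∈ [0,T]`. -/
theorem trotter_product_formula_bounded_selfAdjoint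
    {𝓗 : Type*} [NormedAddCommGroup 𝓗] [InnerProductSpace ℂ 𝓗] [CompleteSpace 𝓗]
    (A B : 𝓗 →L[ℂ] 𝓗) (hA : IsSelfAdjoint A) (hB : IsSelfAdjoint B) :
    ∀ u : 𝓗, ∀ T > (0 : ℝ), ∀ ε > (0 : ℝ), ∃ N : ℕ, ∀ n ≥ N,
      ∀ t ∈ Set.Icc (0 : ℝ) T,
        ‖((NormedSpace.exp (Complex.I • ((t / n : ℝ) : ℂ) • A)).comp
              (NormedSpace.exp (Complex.I • ((t / n : ℝ) : ℂ) • B)) ^ n) u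
          - NormedSpace.exp (Complex.I • (t : ℂ) • (A + B)) u‖ ≤ ε := by
  intro u T hT ε hε
  rcases subsingleton_or_nontrivial 𝓗 with hsub | hnt
  · exact ⟨0, fun n _ t _ => by
      rw [Subsingleton.elim (_ - _) (0 : 𝓗), norm_zero]; exact hε.le⟩
  have hone : ‖(1 : 𝓗 →L[ℂ] 𝓗)‖ ≤ 1 := by
    rw [ContinuousLinearMap.one_def]; exact ContinuousLinearMap.norm_id_le
  set M := ‖A‖ + ‖B‖ with hM
  have hM0 : 0 ≤ M := by positivity
  set C := 5 * (T * M) ^ 2 * Real.exp (2 * (T * M)) * ‖u‖ with hC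
  have hC0 : 0 ≤ C := by positivity
  obtain ⟨N, hN⟩ := exists_nat_gt (C / ε)
  refine ⟨N + 1, fun n hn t ht => ?_⟩
  have hn1 : 1 ≤ n := le_trans (Nat.le_add_left 1 N) hn
  have hnR : (0 : ℝ) < n := by exact_mod_cast hn1
  obtain ⟨ht0, htT⟩ := ht
  set s : ℝ := t / n with hs
  have hs0 : 0 ≤ s := div_nonneg ht0 hnR.le
  have hsT : s ≤ T / n := by rw [hs]; gcongr
  set X := Complex.I • ((s : ℝ) : ℂ) • A with hX
  set Y := Complex.I • ((s : ℝ) : ℂ) • B with hY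
  set P := NormedSpace.exp X * NormedSpace.exp Y with hP
  set Q := NormedSpace.exp (Complex.I • ((s : ℝ) : ℂ) • (A + B)) with hQ
  -- norms of X and Y
  have hnX : ‖X‖ = s * ‖A‖ := by
    rw [hX, norm_smul, norm_smul, Complex.norm_I, Complex.norm_real, one_mul,
      Real.norm_eq_abs, abs_of_nonneg hs0]
  have hnY : ‖Y‖ = s * ‖B‖ := by
    rw [hY, norm_smul, norm_smul, Complex.norm_I, Complex.norm_real, one_mul,
      Real.norm_eq_abs, abs_of_nonneg hs0]
  -- X + Y
  have hXY : X + Y = Complex.I • ((s : ℝ) : ℂ) • (A + B) := by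
    rw [hX, hY, smul_add, smul_add]
  -- norm one facts
  have hPn : ‖P‖ ≤ 1 := by
    rw [hP]
    calc ‖NormedSpace.exp X * NormedSpace.exp Y‖
        ≤ ‖NormedSpace.exp X‖ * ‖NormedSpace.exp Y‖ := norm_mul_le _ _
      _ = 1 := by rw [hX, hY, trotter_norm_exp_smul A hA s, trotter_norm_exp_smul B hB s,
            one_mul]
  have hQn : ‖Q‖ ≤ 1 := by
    rw [hQ, trotter_norm_exp_smul (A + B) (hA.add hB) s]
  -- Q ^ n = exp (I t (A + B))
  have hQpow : Q ^ n = NormedSpace.exp (Complex.I • (t : ℂ) • (A + B)) := by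
    let +nondep : NormedAlgebra ℚ (𝓗 →L[ℂ] 𝓗) := .restrictScalars ℚ ℂ _
    rw [hQ, ← NormedSpace.exp_nsmul]
    congr 1
    have hnne : (n : ℂ) ≠ 0 := Nat.cast_ne_zero.2 (by omega)
    have hns : (n : ℂ) * ((s : ℝ) : ℂ) = (t : ℂ) := by
      rw [hs]; push_cast; rw [mul_comm]; exact div_mul_cancel₀ _ hnne
    rw [← Nat.cast_smul_eq_nsmul ℂ, smul_smul, smul_smul, smul_smul]
    congr 1
    rw [← hns]; ring
  -- the key quantitative bound
  have hprod : ‖P - Q‖ ≤ 5 * (s * M) ^ 2 * Real.exp (2 * (s * M)) := by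
    rw [hP, hQ, ← hXY]
    have h := trotter_exp_prod_sub X Y hone
    have habs : ‖X‖ + ‖Y‖ = s * M := by rw [hnX, hnY, hM]; ring
    rwa [habs] at h
  -- main estimate
  have hmain : ‖(P ^ n) u - NormedSpace.exp (Complex.I • (t : ℂ) • (A + B)) u‖
      ≤ n * ‖P - Q‖ * ‖u‖ := by
    rw [← hQpow, ← ContinuousLinearMap.sub_apply]
    calc ‖(P ^ n - Q ^ n) u‖ ≤ ‖P ^ n - Q ^ n‖ * ‖u‖ :=
          ContinuousLinearMap.le_opNorm _ _
      _ ≤ n * ‖P - Q‖ * ‖u‖ := by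
          apply mul_le_mul_of_nonneg_right _ (norm_nonneg u)
          exact trotter_pow_sub_pow P Q hone hPn hQn n
  -- numerics
  have hsM : s * M ≤ T * M / n := by
    calc s * M ≤ (T / n) * M := mul_le_mul_of_nonneg_right hsT hM0
      _ = T * M / n := by ring
  have hsM' : s * M ≤ T * M := hsM.trans (by
    rw [div_le_iff₀ hnR]
    nlinarith [mul_nonneg (mul_nonneg hT.le hM0) (sub_nonneg.2 (show (1:ℝ) ≤ n from by exact_mod_cast hn1))])
  have hbound : (n : ℝ) * ‖P - Q‖ * ‖u‖ ≤ C / n := by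
    calc (n : ℝ) * ‖P - Q‖ * ‖u‖
        ≤ n * (5 * (s * M) ^ 2 * Real.exp (2 * (s * M))) * ‖u‖ := by
          apply mul_le_mul_of_nonneg_right _ (norm_nonneg u)
          exact mul_le_mul_of_nonneg_left hprod hnR.le
      _ ≤ n * (5 * (T * M / n) ^ 2 * Real.exp (2 * (T * M))) * ‖u‖ := by
          gcongr
      _ = C / n := by
          rw [hC]; field_simp
  have hfin : C / n ≤ ε := by
    rw [div_le_iff₀ hnR]
    have hNn : (N : ℝ) < n := by exact_mod_cast Nat.lt_of_lt_of_le (Nat.lt_succ_self N) hn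
    have : C / ε < n := hN.trans hNn
    rw [div_lt_iff₀ hε] at this
    linarith
  -- put it together
  have hcomp : (NormedSpace.exp X).comp (NormedSpace.exp Y) = P :=
    (ContinuousLinearMap.mul_def _ _).symm
  rw [hcomp]
  exact le_trans hmain (le_trans hbound hfin)
end
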